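/- Let n be a positive integer, Ω > 0, let m be a positive integer, and let u : [0,Ω] → ℝ be the piecewise-linear interpolant of ξ ↦ ξ² at the nodes kΩ/m, k = 0,…,m. Then every ξ = (ξ_1,…,ξ_n) ∈ [0,Ω]^n with Σ_{j=1}^n (u(ξ_j) − Ω²/(4m²)) ≤ Ω² satisfies Σ_{j=1}^n ξ_j² ≤ Ω²(1 + n/(4m²)). In other words, the outer polyhedral approximation {ξ ∈ [0,Ω]^n : Σ_j (u(ξ_j) − Ω²/(4m²)) ≤ Ω²} of the ball of radius Ω is contained in the Euclidean ball of radius Ω·√(1 + n/(4m²)). -/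

import Mathlib

/-- Let `n ≥ 1`, `Ω > 0`, let `m` be a positive integer, and let
`u : [0,Ω] → ℝ` be the piecewise-linear interpolant of `ξ ↦ ξ²` at the nodes `kΩ/m`,
`k = 0,…,m`.  Then every `ξ ∈ [0,Ω]^n` with `Σ_j (u(ξ_j) − Ω²/(4m²)) ≤ Ω²` satisfies
`Σ_j ξ_j² ≤ Ω²(1 + n/(4m²))`: the outer polyhedral approximation is contained in the
Euclidean ball of radius `Ω√(1 + n/(4m²))`. -/
theorem stmt_4 (n : ℕ) (hn : 0 < n) (Ω : ℝ) (hΩ : 0 < Ω) (m : ℕ) (hm : 0 < m)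
    (u : ℝ → ℝ)
    (hu : ∀ k : ℕ, 1 ≤ k → k ≤ m → ∀ ξ : ℝ,
      ((k : ℝ) - 1) * Ω / m ≤ ξ → ξ ≤ (k : ℝ) * Ω / m →
      u ξ = (2 * (k : ℝ) - 1) * Ω / m * ξ - ((k : ℝ) - 1) * (k : ℝ) * Ω ^ 2 / m ^ 2) :
    ∀ ξ : Fin n → ℝ, (∀ j, 0 ≤ ξ j ∧ ξ j ≤ Ω) →
      (∑ j, (u (ξ j) - Ω ^ 2 / (4 * m ^ 2))) ≤ Ω ^ 2 →
      (∑ j, ξ j ^ 2) ≤ Ω ^ 2 * (1 + n / (4 * m ^ 2)) := by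
  intro ξ hξ hsum
  have hm' : (0:ℝ) < m := by exact_mod_cast hm
  have key : ∀ j, (ξ j)^2 ≤ u (ξ j) := by
    intro j
    obtain ⟨h0, h1⟩ := hξ j
    set x := ξ j with hx
    set t : ℝ := x * m / Ω with ht
    have ht0 : 0 ≤ t := by positivity
    have htm : t ≤ m := by
      rw [ht, div_le_iff₀ hΩ]
      nlinarith
    -- choose k
    by_cases hc : ⌈t⌉₊ = 0
    · -- t = 0 so x = 0, use k = 1
      have ht0' : t ≤ 0 := by
        have := Nat.ceil_eq_zero.mp hc
        linarith
      have hx0 : x = 0 := by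
        have : x * m / Ω = 0 := le_antisymm ht0' ht0
        have h2 : x * m = 0 := by
          field_simp at this; linarith
        rcases mul_eq_zero.mp h2 with h | h
        · exact h
        · exact absurd h (ne_of_gt hm')
      have hlow : ((1:ℝ) - 1) * Ω / m ≤ x := by rw [hx0]; simp
      have hhigh : x ≤ (1:ℝ) * Ω / m := by
        rw [hx0]; positivity
      have := hu 1 le_rfl hm x (by exact_mod_cast hlow) (by exact_mod_cast hhigh)
      rw [this, hx0]
      norm_num
    · set k : ℕ := ⌈t⌉₊ with hk
      have hk1 : 1 ≤ k := Nat.one_le_iff_ne_zero.mpr hc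
      have hkm : k ≤ m := Nat.ceil_le.mpr (by exact_mod_cast htm)
      have hkt : t ≤ k := Nat.le_ceil t
      have hkt' : ((k:ℝ) - 1) ≤ t := by
        have h1 : (k - 1 : ℕ) < ⌈t⌉₊ := by omega
        have h2 : ((k - 1 : ℕ) : ℝ) < t := Nat.lt_ceil.mp h1
        have h3 : ((k - 1 : ℕ) : ℝ) = (k:ℝ) - 1 := by
          push_cast [hk1]; ring
        linarith [h3 ▸ h2]
      have hkt2 : ((k:ℝ) - 1) * Ω ≤ x * m := by
        have := (le_div_iff₀ hΩ).mp hkt'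
        linarith
      have hkt3 : x * m ≤ (k:ℝ) * Ω := by
        have := (div_le_iff₀ hΩ).mp hkt
        linarith
      have hlow : ((k:ℝ) - 1) * Ω / m ≤ x := by
        rw [div_le_iff₀ hm']
        linarith
      have hhigh : x ≤ (k:ℝ) * Ω / m := by
        rw [le_div_iff₀ hm']
        linarith
      have huv := hu k hk1 hkm x hlow hhigh
      rw [huv]
      have hprod : 0 ≤ (x - ((k:ℝ) - 1) * Ω / m) * ((k:ℝ) * Ω / m - x) :=
        mul_nonneg (by linarith) (by linarith)
      have hexp : (2 * (k : ℝ) - 1) * Ω / m * x - ((k : ℝ) - 1) * (k : ℝ) * Ω ^ 2 / m ^ 2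
          - x ^ 2 = (x - ((k:ℝ) - 1) * Ω / m) * ((k:ℝ) * Ω / m - x) := by
        field_simp
        ring
      linarith [hexp ▸ hprod]
  calc ∑ j, ξ j ^ 2 ≤ ∑ j, u (ξ j) := Finset.sum_le_sum fun j _ => key j
    _ = (∑ j, (u (ξ j) - Ω ^ 2 / (4 * m ^ 2))) + n * (Ω ^ 2 / (4 * m ^ 2)) := by
        rw [Finset.sum_sub_distrib]
        simp [Finset.card_univ]
    _ ≤ Ω ^ 2 + n * (Ω ^ 2 / (4 * m ^ 2)) := by linarith
    _ = Ω ^ 2 * (1 + n / (4 * m ^ 2)) := by ring
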